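/- arXiv:2604.06349 — 2 statements merged into one kernel-verified Lean document; each statement's English description precedes it below -/
import Mathlib

section
/- (Proposition 2 of the paper, limit form: consistency of the second-order-free gradient approximation.) Let E and W be finite-dimensional real inner product spaces, let L_in : E × W → ℝ be twice continuously differentiable (C²), let L_out : W × E → ℝ be continuously differentiable (C¹), let θ₀ ∈ E and α ∈ ℝ, and define Θ*(ω) = θ₀ − α • ∇_θ L_in(θ₀, ω) and F(ω) = L_out(ω, Θ*(ω)). Fix ω ∈ W and set δ = ∇_Θ L_out(ω, Θ*(ω)) ∈ E, and for real ε ≠ 0 set θ⁺_ε = θ₀ + ε • δ and θ⁻_ε = θ₀ − ε • δ. Then the approximated gradient ∇_ω L_out(ω, Θ*(ω)) − (α/(2ε)) • (∇_ω L_in(θ⁺_ε, ω) − ∇_ω L_in(θ⁻_ε, ω)) tends to the true gradient ∇F(ω) in W as ε tends to 0 (over ε ≠ 0). -/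
open Filter Topology RealInnerProductSpace InnerProductSpace ContinuousLinearMap

noncomputable def dualIso (E : Type*) [NormedAddCommGroup E] [InnerProductSpace ℝ E]
    [CompleteSpace E] : StrongDual ℝ E →L[ℝ] E :=
  ⟨{ toFun := (toDual ℝ E).symm, map_add' := fun x y => map_add _ x y,
     map_smul' := fun r x => by simp [map_smulₛₗ, starRingEnd_apply] },
    (toDual ℝ E).symm.continuous⟩

@[simp] lemma dualIso_apply {E : Type*} [NormedAddCommGroup E] [InnerProductSpace ℝ E]
    [CompleteSpace E] (y : StrongDual ℝ E) : dualIso E y = (toDual ℝ E).symm y := rfl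

lemma symm_diff_tendsto {X : Type*} [NormedAddCommGroup X] [NormedSpace ℝ X]
    {g : ℝ → X} {l : X} (h : HasDerivAt g l 0) :
    Tendsto (fun ε : ℝ => (2 * ε)⁻¹ • (g ε - g (-ε))) (𝓝[≠] (0:ℝ)) (𝓝 l) := by
  have h1 : Tendsto (slope g 0) (𝓝[≠] (0:ℝ)) (𝓝 l) := hasDerivAt_iff_tendsto_slope.mp h
  have hneg : Tendsto (fun ε : ℝ => -ε) (𝓝[≠] (0:ℝ)) (𝓝[≠] (0:ℝ)) := by
    apply tendsto_nhdsWithin_of_tendsto_nhds_of_eventually_within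
    · simpa using (continuous_neg.tendsto (0:ℝ)).mono_left nhdsWithin_le_nhds
    · filter_upwards [self_mem_nhdsWithin] with x hx
      simpa using (neg_ne_zero.mpr hx)
  have h2 : Tendsto (fun ε : ℝ => slope g 0 (-ε)) (𝓝[≠] (0:ℝ)) (𝓝 l) := h1.comp hneg
  have h3 := (h1.add h2).const_smul (2⁻¹ : ℝ)
  have hl : (2⁻¹ : ℝ) • (l + l) = l := by
    rw [← two_smul ℝ l, smul_smul]; norm_num
  rw [hl] at h3
  refine h3.congr' ?_
  filter_upwards [self_mem_nhdsWithin] with ε hε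
  have hε' : (ε : ℝ) ≠ 0 := hε
  simp only [slope_def_module, sub_zero]
  match_scalars <;> (field_simp; try ring)


/-- Proposition 2, limit form: the second-order-free approximated gradient converges
to the true outer gradient as `ε → 0`. -/
theorem bisdg_proposition_two_limit
    {E W : Type*}
    [NormedAddCommGroup E] [InnerProductSpace ℝ E] [FiniteDimensional ℝ E]
    [NormedAddCommGroup W] [InnerProductSpace ℝ W] [FiniteDimensional ℝ W]
    (Lin : E × W → ℝ) (hLin : ContDiff ℝ 2 Lin)
    (Lout : W × E → ℝ) (hLout : ContDiff ℝ 1 Lout)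
    (θ₀ : E) (α : ℝ)
    (Θs : W → E)
    (hΘ : Θs = fun ω => θ₀ - α • gradient (fun θ' => Lin (θ', ω)) θ₀)
    (F : W → ℝ) (hF : F = fun ω => Lout (ω, Θs ω))
    (ω : W) (δ : E) (hδ : δ = gradient (fun θ' => Lout (ω, θ')) (Θs ω)) :
    Tendsto (fun ε : ℝ =>
        gradient (fun ω' => Lout (ω', Θs ω)) ω
          - (α / (2 * ε)) • (gradient (fun ω' => Lin (θ₀ + ε • δ, ω')) ω
              - gradient (fun ω' => Lin (θ₀ - ε • δ, ω')) ω))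
      (𝓝[≠] (0 : ℝ)) (𝓝 (gradient F ω)) := by
  have hd1 : Differentiable ℝ Lin := hLin.differentiable two_ne_zero
  have hdo : Differentiable ℝ Lout := hLout.differentiable one_ne_zero
  have hf' : ContDiff ℝ 1 (fderiv ℝ Lin) := hLin.fderiv_right (by norm_num)
  set f'' : (E × W) →L[ℝ] (E × W) →L[ℝ] ℝ := fderiv ℝ (fderiv ℝ Lin) (θ₀, ω) with hf''def
  set dW : ((E × W) →L[ℝ] ℝ) →L[ℝ] W :=
    (dualIso W).comp ((ContinuousLinearMap.compL ℝ W (E × W) ℝ).flip (inr ℝ E W)) with hdWdef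
  set dE : ((E × W) →L[ℝ] ℝ) →L[ℝ] E :=
    (dualIso E).comp ((ContinuousLinearMap.compL ℝ E (E × W) ℝ).flip (inl ℝ E W)) with hdEdef
  have hdW_inner : ∀ (L : (E × W) →L[ℝ] ℝ) (v : W), ⟪dW L, v⟫ = L (0, v) := by
    intro L v
    simp [hdWdef, toDual_symm_apply]
  have hdE_inner : ∀ (L : (E × W) →L[ℝ] ℝ) (u : E), ⟪dE L, u⟫ = L (u, 0) := by
    intro L u
    simp [hdEdef, toDual_symm_apply]
  -- partial gradients of Lin in ω
  have hpartW : ∀ θ : E, HasFDerivAt (fun ω'' => Lin (θ, ω''))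
      ((fderiv ℝ Lin (θ, ω)).comp (inr ℝ E W)) ω :=
    fun θ => (hd1 (θ, ω)).hasFDerivAt.comp ω (hasFDerivAt_prodMk_right θ ω)
  have hgradW : ∀ θ : E, gradient (fun ω'' => Lin (θ, ω'')) ω = dW (fderiv ℝ Lin (θ, ω)) := by
    intro θ
    rw [gradient, (hpartW θ).fderiv]
    rfl
  -- G and its derivative along the line
  set G : E → W := fun θ => dW (fderiv ℝ Lin (θ, ω)) with hGdef
  have hf'd : HasFDerivAt (fderiv ℝ Lin) f'' (θ₀, ω) :=
    ((hf'.differentiable one_ne_zero) (θ₀, ω)).hasFDerivAt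
  have hG : HasFDerivAt G (dW ∘L (f'' ∘L inl ℝ E W)) θ₀ := by
    rw [hGdef]
    have h := hasFDerivAt_prodMk_left (𝕜 := ℝ) θ₀ ω
    have h1 := HasFDerivAt.comp (g := fderiv ℝ Lin) θ₀ hf'd h
    exact HasFDerivAt.comp (g := ⇑dW) θ₀ dW.hasFDerivAt h1
  have hγ : HasDerivAt (fun ε : ℝ => θ₀ + ε • δ) δ 0 := by
    simpa using ((hasDerivAt_id (0:ℝ)).smul_const δ).const_add θ₀
  have hG0 : HasFDerivAt G (dW ∘L (f'' ∘L inl ℝ E W)) ((fun ε : ℝ => θ₀ + ε • δ) 0) := by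
    simpa using hG
  have hg : HasDerivAt (fun ε : ℝ => G (θ₀ + ε • δ)) (dW (f'' (δ, 0))) 0 := by
    have := hG0.comp_hasDerivAt 0 hγ
    simpa [Function.comp_def] using this
  have hlim : Tendsto (fun ε : ℝ => (2 * ε)⁻¹ • (G (θ₀ + ε • δ) - G (θ₀ + (-ε) • δ)))
      (𝓝[≠] (0:ℝ)) (𝓝 (dW (f'' (δ, 0)))) := symm_diff_tendsto hg
  set A : W := gradient (fun ω' => Lout (ω', Θs ω)) ω with hAdef
  have hmain : Tendsto (fun ε : ℝ => A - α • ((2 * ε)⁻¹ • (G (θ₀ + ε • δ) - G (θ₀ + (-ε) • δ))))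
      (𝓝[≠] (0:ℝ)) (𝓝 (A - α • dW (f'' (δ, 0)))) :=
    tendsto_const_nhds.sub (hlim.const_smul α)
  -- identify the function
  have hfun : ∀ ε : ℝ, A - α • ((2 * ε)⁻¹ • (G (θ₀ + ε • δ) - G (θ₀ + (-ε) • δ)))
      = A - (α / (2 * ε)) • (gradient (fun ω' => Lin (θ₀ + ε • δ, ω')) ω
          - gradient (fun ω' => Lin (θ₀ - ε • δ, ω')) ω) := by
    intro ε
    rw [hgradW, hgradW, smul_smul, div_eq_mul_inv]
    congr 3
    rw [neg_smul, ← sub_eq_add_neg]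
  -- identify the limit point
  -- derivative of Θs
  have hpartE : ∀ ω' : W, HasFDerivAt (fun θ' => Lin (θ', ω'))
      ((fderiv ℝ Lin (θ₀, ω')).comp (inl ℝ E W)) θ₀ :=
    fun ω' => (hd1 (θ₀, ω')).hasFDerivAt.comp θ₀ (hasFDerivAt_prodMk_left θ₀ ω')
  have hΘ2 : Θs = fun ω' => θ₀ - α • dE (fderiv ℝ Lin (θ₀, ω')) := by
    rw [hΘ]; funext ω'
    rw [gradient, (hpartE ω').fderiv]
    rfl
  have hH : HasFDerivAt (fun ω' => dE (fderiv ℝ Lin (θ₀, ω'))) (dE ∘L (f'' ∘L inr ℝ E W)) ω := by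
    have h := hasFDerivAt_prodMk_right (𝕜 := ℝ) θ₀ ω
    have h1 := HasFDerivAt.comp (g := fderiv ℝ Lin) ω hf'd h
    exact HasFDerivAt.comp (g := ⇑dE) ω dE.hasFDerivAt h1
  set DΘ : W →L[ℝ] E := 0 - α • (dE ∘L (f'' ∘L inr ℝ E W)) with hDΘdef
  have hΘs : HasFDerivAt Θs DΘ ω := by
    rw [hΘ2]
    exact (hasFDerivAt_const θ₀ ω).sub (hH.const_smul α)
  set p' : W × E := (ω, Θs ω) with hp'def
  have hFd : HasFDerivAt F ((fderiv ℝ Lout p') ∘L ((ContinuousLinearMap.id ℝ W).prod DΘ)) ω := by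
    rw [hF]
    exact (hdo p').hasFDerivAt.comp ω (HasFDerivAt.prodMk (hasFDerivAt_id ω) hΘs)
  -- A and δ in terms of fderiv Lout
  have hApart : HasFDerivAt (fun ω' => Lout (ω', Θs ω)) ((fderiv ℝ Lout p').comp (inl ℝ W E)) ω :=
    (hdo p').hasFDerivAt.comp ω (hasFDerivAt_prodMk_left ω (Θs ω))
  have hAinner : ∀ v : W, ⟪A, v⟫ = fderiv ℝ Lout p' (v, 0) := by
    intro v
    rw [hAdef, gradient, hApart.fderiv]
    simp [toDual_symm_apply]
  have hδpart : HasFDerivAt (fun θ' => Lout (ω, θ')) ((fderiv ℝ Lout p').comp (inr ℝ W E)) (Θs ω) :=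
    (hdo p').hasFDerivAt.comp (Θs ω) (hasFDerivAt_prodMk_right ω (Θs ω))
  have hδinner : ∀ u : E, ⟪δ, u⟫ = fderiv ℝ Lout p' (0, u) := by
    intro u
    rw [hδ, gradient, hδpart.fderiv]
    simp [toDual_symm_apply]
  have hsym : ∀ v : W, f'' (δ, 0) (0, v) = f'' (0, v) (δ, 0) := by
    intro v
    exact (hLin.contDiffAt.isSymmSndFDerivAt (by norm_num)).eq (δ, 0) (0, v)
  have hpoint : gradient F ω = A - α • dW (f'' (δ, 0)) := by
    apply ext_inner_left ℝ
    intro v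
    rw [real_inner_comm (gradient F ω) v, gradient, hFd.fderiv, toDual_symm_apply]
    have hsplit : ((fderiv ℝ Lout p') ∘L ((ContinuousLinearMap.id ℝ W).prod DΘ)) v
        = fderiv ℝ Lout p' (v, 0) + fderiv ℝ Lout p' (0, DΘ v) := by
      have : ((v : W), DΘ v) = (v, (0:E)) + ((0:W), DΘ v) := by simp
      simp only [ContinuousLinearMap.comp_apply, ContinuousLinearMap.prod_apply,
        ContinuousLinearMap.coe_id', id_eq]
      rw [this, map_add]
    rw [hsplit]
    have hDΘv : ∀ v : W, fderiv ℝ Lout p' (0, DΘ v) = -(α * f'' (0, v) (δ, 0)) := by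
      intro v
      rw [← hδinner]
      have : DΘ v = -(α • dE (f'' (0, v))) := by
        simp [hDΘdef]
      rw [this, inner_neg_right, real_inner_smul_right, real_inner_comm, hdE_inner]
    rw [hDΘv v]
    rw [inner_sub_right, real_inner_smul_right, real_inner_comm A v, hAinner,
      real_inner_comm (dW (f'' (δ, 0))) v, hdW_inner, hsym v]
    ring
  rw [hpoint]
  exact hmain.congr hfun
end

section
/- (Quantitative version of Proposition 2.) Let E and W be finite-dimensional real inner product spaces, let L_in : E × W → ℝ be twice continuously differentiable (C²), let L_out : W × E → ℝ be continuously differentiable (C¹), let θ₀ ∈ E, α ∈ ℝ, ω ∈ W, and define Θ*(ω') = θ₀ − α • ∇_θ L_in(θ₀, ω') and F(ω') = L_out(ω', Θ*(ω')). Set δ = ∇_Θ L_out(ω, Θ*(ω)), and suppose in addition there exist r > 0 and M ≥ 0 such that the map G : θ ↦ ∇_ω L_in(θ, ω) is differentiable on the open ball B(θ₀, r) with Fréchet derivative DG that is Lipschitz with constant M on B(θ₀, r). Then for every real ε ≠ 0 with |ε| • ‖δ‖ < r, the approximation error satisfies ‖(∇_ω L_out(ω, Θ*(ω)) − (α/(2ε))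 • (∇_ω L_in(θ₀ + ε • δ, ω) − ∇_ω L_in(θ₀ − ε • δ, ω))) − ∇F(ω)‖ ≤ (|α| M / 2) • |ε| • ‖δ‖². -/
open RealInnerProductSpace

open intervalIntegral in
private lemma central_diff_bound' {E W : Type*}
    [NormedAddCommGroup E] [NormedSpace ℝ E]
    [NormedAddCommGroup W] [NormedSpace ℝ W] [CompleteSpace W]
    (G : E → W) (DG : E → E →L[ℝ] W) (θ₀ : E) (r M : ℝ) (hM : 0 ≤ M)
    (hdiff : ∀ x ∈ Metric.ball θ₀ r, HasFDerivAt G (DG x) x)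
    (hLip : ∀ x ∈ Metric.ball θ₀ r, ∀ y ∈ Metric.ball θ₀ r, ‖DG x - DG y‖ ≤ M * ‖x - y‖)
    (h : E) (hh : ‖h‖ < r) :
    ‖G (θ₀ + h) - G (θ₀ - h) - DG θ₀ ((2:ℝ) • h)‖ ≤ M * ‖h‖ ^ 2 := by
  have hh0 : (0:ℝ) ≤ ‖h‖ := norm_nonneg h
  have hmem : ∀ t : ℝ, t ∈ Set.Icc (-1:ℝ) 1 → θ₀ + t • h ∈ Metric.ball θ₀ r := by
    intro t ht
    simp only [Metric.mem_ball, dist_eq_norm, add_sub_cancel_left]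
    calc ‖t • h‖ = |t| * ‖h‖ := by rw [norm_smul, Real.norm_eq_abs]
    _ ≤ 1 * ‖h‖ := by
        apply mul_le_mul_of_nonneg_right _ hh0
        exact abs_le.2 ⟨ht.1, ht.2⟩
    _ < r := by simpa using hh
  set u : W := DG θ₀ h with hu
  set φ : ℝ → W := fun t => G (θ₀ + t • h) - G (θ₀ - t • h) - (2*t) • u with hφ
  set ψ : ℝ → W := fun t => DG (θ₀ + t • h) h + DG (θ₀ - t • h) h - (2:ℝ) • u with hψ
  have hderiv : ∀ t ∈ Set.uIcc (0:ℝ) 1, HasDerivAt φ (ψ t) t := by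
    intro t ht
    rw [Set.uIcc_of_le (by norm_num : (0:ℝ) ≤ 1)] at ht
    have h1 : HasDerivAt (fun t : ℝ => θ₀ + t • h) h t := by
      simpa using ((hasDerivAt_id t).smul_const h).const_add θ₀
    have h2 : HasDerivAt (fun t : ℝ => θ₀ - t • h) (-h) t := by
      simpa [sub_eq_add_neg] using ((hasDerivAt_id t).smul_const h).neg.const_add θ₀
    have m1 : θ₀ + t • h ∈ Metric.ball θ₀ r :=
      hmem t ⟨by linarith [ht.1], ht.2⟩
    have m2 : θ₀ - t • h ∈ Metric.ball θ₀ r := by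
      have := hmem (-t) ⟨by linarith [ht.2], by linarith [ht.1]⟩
      simpa [neg_smul, sub_eq_add_neg] using this
    have d1 := (hdiff _ m1).comp_hasDerivAt t h1
    have d2 := (hdiff _ m2).comp_hasDerivAt t h2
    have d3 : HasDerivAt (fun t : ℝ => (2*t) • u) ((2:ℝ) • u) t := by
      simpa using ((hasDerivAt_id t).const_mul 2).smul_const u
    have := (d1.sub d2).sub d3
    exact (show HasDerivAt φ _ t from this).congr_deriv (by simp [ψ, map_neg, sub_neg_eq_add])
  have hcont : ContinuousOn ψ (Set.uIcc (0:ℝ) 1) := by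
    rw [Set.uIcc_of_le (by norm_num : (0:ℝ) ≤ 1)]
    have key : ∀ (s : ℝ), (s = 1 ∨ s = -1) → ContinuousOn (fun t : ℝ => DG (θ₀ + (s*t) • h) h) (Set.Icc 0 1) := by
      intro s hs
      apply LipschitzOnWith.continuousOn (K := Real.toNNReal (M * ‖h‖ * ‖h‖))
      apply LipschitzOnWith.of_dist_le_mul
      intro x hx y hy
      have mx : θ₀ + (s*x) • h ∈ Metric.ball θ₀ r := by
        apply hmem; rcases hs with rfl|rfl <;> constructor <;> nlinarith [hx.1, hx.2]
      have my : θ₀ + (s*y) • h ∈ Metric.ball θ₀ r := by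
        apply hmem; rcases hs with rfl|rfl <;> constructor <;> nlinarith [hy.1, hy.2]
      have := hLip _ mx _ my
      have hle : ‖DG (θ₀ + (s*x) • h) h - DG (θ₀ + (s*y) • h) h‖
          ≤ ‖DG (θ₀ + (s*x) • h) - DG (θ₀ + (s*y) • h)‖ * ‖h‖ := by
        simpa using (DG (θ₀ + (s*x) • h) - DG (θ₀ + (s*y) • h)).le_opNorm h
      rw [dist_eq_norm, dist_eq_norm]
      have hnorm : ‖(θ₀ + (s*x) • h) - (θ₀ + (s*y) • h)‖ = |s| * |x - y| * ‖h‖ := by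
        have : (θ₀ + (s*x) • h) - (θ₀ + (s*y) • h) = (s*(x - y)) • h := by
          rw [mul_sub, sub_smul]; abel
        rw [this, norm_smul, Real.norm_eq_abs, abs_mul]
      have habs : |s| = 1 := by rcases hs with rfl|rfl <;> norm_num
      calc ‖DG (θ₀ + (s*x) • h) h - DG (θ₀ + (s*y) • h) h‖
          ≤ ‖DG (θ₀ + (s*x) • h) - DG (θ₀ + (s*y) • h)‖ * ‖h‖ := hle
        _ ≤ (M * ‖(θ₀ + (s*x) • h) - (θ₀ + (s*y) • h)‖) * ‖h‖ :=
            mul_le_mul_of_nonneg_right this (norm_nonneg h)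
        _ = Real.toNNReal (M * ‖h‖ * ‖h‖) * |x - y| := by
            rw [hnorm, habs, Real.coe_toNNReal _ (by positivity)]; ring
    have c1 := key 1 (Or.inl rfl)
    have c2 := key (-1) (Or.inr rfl)
    simp only [one_mul, neg_one_mul, neg_smul, ← sub_eq_add_neg] at c1 c2
    exact (c1.add c2).sub continuousOn_const
  have hint : IntervalIntegrable ψ MeasureTheory.volume 0 1 :=
    hcont.intervalIntegrable
  have hFTC := intervalIntegral.integral_eq_sub_of_hasDerivAt hderiv hint
  have hφ1 : φ 1 - φ 0 = G (θ₀ + h) - G (θ₀ - h) - DG θ₀ ((2:ℝ) • h) := by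
    simp [φ, hu, map_smul]
  have hbound : ∀ t ∈ Set.Icc (0:ℝ) 1, ‖ψ t‖ ≤ 2 * M * ‖h‖^2 * t := by
    intro t ht
    have m1 : θ₀ + t • h ∈ Metric.ball θ₀ r := hmem t ⟨by linarith [ht.1], ht.2⟩
    have m2 : θ₀ - t • h ∈ Metric.ball θ₀ r := by
      have := hmem (-t) ⟨by linarith [ht.2], by linarith [ht.1]⟩
      simpa [neg_smul, sub_eq_add_neg] using this
    have m0 : θ₀ ∈ Metric.ball θ₀ r := by
      simp [Metric.mem_ball]; linarith [hh0]
    have e : ψ t = (DG (θ₀ + t • h) - DG θ₀) h + (DG (θ₀ - t • h) - DG θ₀) h := by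
      simp [ψ, hu, two_smul]; abel
    have b1 : ‖(DG (θ₀ + t • h) - DG θ₀) h‖ ≤ M * (t*‖h‖) * ‖h‖ := by
      calc ‖(DG (θ₀ + t • h) - DG θ₀) h‖ ≤ ‖DG (θ₀ + t • h) - DG θ₀‖ * ‖h‖ :=
            (DG (θ₀ + t • h) - DG θ₀).le_opNorm h
        _ ≤ (M * ‖(θ₀ + t • h) - θ₀‖) * ‖h‖ :=
            mul_le_mul_of_nonneg_right (hLip _ m1 _ m0) (norm_nonneg h)
        _ = M * (t*‖h‖) * ‖h‖ := by
            rw [add_sub_cancel_left, norm_smul, Real.norm_eq_abs, abs_of_nonneg ht.1]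
    have b2 : ‖(DG (θ₀ - t • h) - DG θ₀) h‖ ≤ M * (t*‖h‖) * ‖h‖ := by
      calc ‖(DG (θ₀ - t • h) - DG θ₀) h‖ ≤ ‖DG (θ₀ - t • h) - DG θ₀‖ * ‖h‖ :=
            (DG (θ₀ - t • h) - DG θ₀).le_opNorm h
        _ ≤ (M * ‖(θ₀ - t • h) - θ₀‖) * ‖h‖ :=
            mul_le_mul_of_nonneg_right (hLip _ m2 _ m0) (norm_nonneg h)
        _ = M * (t*‖h‖) * ‖h‖ := by
            rw [sub_sub_cancel_left, norm_neg, norm_smul, Real.norm_eq_abs, abs_of_nonneg ht.1]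
    calc ‖ψ t‖ ≤ M * (t*‖h‖) * ‖h‖ + M * (t*‖h‖) * ‖h‖ := by
          rw [e]; exact (norm_add_le _ _).trans (add_le_add b1 b2)
      _ = 2 * M * ‖h‖^2 * t := by ring
  calc ‖G (θ₀ + h) - G (θ₀ - h) - DG θ₀ ((2:ℝ) • h)‖ = ‖∫ t in (0:ℝ)..1, ψ t‖ := by
        rw [hFTC, hφ1]
    _ ≤ ∫ t in (0:ℝ)..1, ‖ψ t‖ :=
        intervalIntegral.norm_integral_le_integral_norm (by norm_num)
    _ ≤ ∫ t in (0:ℝ)..1, 2 * M * ‖h‖^2 * t := by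
        apply intervalIntegral.integral_mono_on (by norm_num) hint.norm
        · exact (continuous_const.mul continuous_id).intervalIntegrable 0 1
        · exact hbound
    _ = M * ‖h‖^2 := by
        rw [intervalIntegral.integral_const_mul, integral_id]; ring


set_option maxHeartbeats 2000000 in
/-- Quantitative version of Proposition 2: error bound for the second-order-free
gradient approximation when `θ ↦ ∇_ω L_in(θ, ω)` has a Lipschitz derivative. -/
theorem bisdg_proposition_two_quantitative
    {E W : Type*}
    [NormedAddCommGroup E] [InnerProductSpace ℝ E] [FiniteDimensional ℝ E]
    [NormedAddCommGroup W] [InnerProductSpace ℝ W] [FiniteDimensional ℝ W]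
    (Lin : E × W → ℝ) (hLin : ContDiff ℝ 2 Lin)
    (Lout : W × E → ℝ) (hLout : ContDiff ℝ 1 Lout)
    (θ₀ : E) (α : ℝ) (ω : W)
    (Θs : W → E)
    (hΘ : Θs = fun ω' => θ₀ - α • gradient (fun θ' => Lin (θ', ω')) θ₀)
    (F : W → ℝ) (hF : F = fun ω' => Lout (ω', Θs ω'))
    (δ : E) (hδ : δ = gradient (fun θ' => Lout (ω, θ')) (Θs ω))
    (G : E → W) (hG : G = fun θ => gradient (fun ω' => Lin (θ, ω')) ω)
    (r M : ℝ) (hr : 0 < r) (hM : 0 ≤ M)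
    (DG : E → E →L[ℝ] W)
    (hdiff : ∀ x ∈ Metric.ball θ₀ r, HasFDerivAt G (DG x) x)
    (hLip : ∀ x ∈ Metric.ball θ₀ r, ∀ y ∈ Metric.ball θ₀ r, ‖DG x - DG y‖ ≤ M * ‖x - y‖)
    (ε : ℝ) (hε : ε ≠ 0) (hεδ : |ε| * ‖δ‖ < r) :
    ‖(gradient (fun ω' => Lout (ω', Θs ω)) ω
        - (α / (2 * ε)) • (G (θ₀ + ε • δ) - G (θ₀ - ε • δ)))
      - gradient F ω‖
      ≤ (|α| * M / 2) * |ε| * ‖δ‖ ^ 2 := by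
  have key : gradient F ω = gradient (fun ω' => Lout (ω', Θs ω)) ω - α • (DG θ₀ δ) := by
    have hd1 : Differentiable ℝ Lin := hLin.differentiable two_ne_zero
    have hfd : ContDiff ℝ 1 (fderiv ℝ Lin) := hLin.fderiv_right (by norm_num)
    have hd2 : Differentiable ℝ (fderiv ℝ Lin) := hfd.differentiable one_ne_zero
    have hLoutd : Differentiable ℝ Lout := hLout.differentiable one_ne_zero
    set q : E := Θs ω with hq
    set D2 : (E × W) →L[ℝ] (E × W) →L[ℝ] ℝ := fderiv ℝ (fderiv ℝ Lin) (θ₀, ω) with hD2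
    have hsym : ∀ a b, D2 a b = D2 b a := fun a b =>
      second_derivative_symmetric (fun y => (hd1 y).hasFDerivAt) ((hd2 (θ₀, ω)).hasFDerivAt) a b
    set inlE := ContinuousLinearMap.inl ℝ E W with hinlE
    set inrW := ContinuousLinearMap.inr ℝ E W with hinrW
    set dualE : (E →L[ℝ] ℝ) →L[ℝ] E :=
      ((InnerProductSpace.toDual ℝ E).symm.toContinuousLinearEquiv :
        (E →L[ℝ] ℝ) ≃L[ℝ] E).toContinuousLinearMap with hdualE
    set dualW : (W →L[ℝ] ℝ) →L[ℝ] W :=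
      ((InnerProductSpace.toDual ℝ W).symm.toContinuousLinearEquiv :
        (W →L[ℝ] ℝ) ≃L[ℝ] W).toContinuousLinearMap with hdualW
    set Aθ : ((E × W) →L[ℝ] ℝ) →L[ℝ] (E →L[ℝ] ℝ) :=
      (ContinuousLinearMap.compL ℝ E (E × W) ℝ).flip inlE with hAθ
    set Aω : ((E × W) →L[ℝ] ℝ) →L[ℝ] (W →L[ℝ] ℝ) :=
      (ContinuousLinearMap.compL ℝ W (E × W) ℝ).flip inrW with hAω
    -- derivative of the inner-gradient map g
    have hpartθ : ∀ ω' : W, fderiv ℝ (fun θ' => Lin (θ', ω')) θ₀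
        = (fderiv ℝ Lin (θ₀, ω')).comp inlE := fun ω' =>
      (((hd1 (θ₀, ω')).hasFDerivAt).comp θ₀ (hasFDerivAt_prodMk_left θ₀ ω')).fderiv
    have hgexpr : (fun ω' => gradient (fun θ' => Lin (θ', ω')) θ₀)
        = fun ω' => dualE (Aθ (fderiv ℝ Lin (θ₀, ω'))) := by
      funext ω'
      show (InnerProductSpace.toDual ℝ E).symm (fderiv ℝ (fun θ' => Lin (θ', ω')) θ₀) = _
      rw [hpartθ ω']
      rfl
    have hB : HasFDerivAt (fun ω' => fderiv ℝ Lin (θ₀, ω')) (D2.comp inrW) ω := by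
      have k1 := (hd2 (θ₀, ω)).hasFDerivAt
      have k2 := hasFDerivAt_prodMk_right (𝕜 := ℝ) θ₀ ω
      exact k1.comp (F := E × W) (G := (E × W) →L[ℝ] ℝ) ω k2
    set Dg : W →L[ℝ] E := dualE.comp (Aθ.comp (D2.comp inrW)) with hDg
    have hg : HasFDerivAt (fun ω' => gradient (fun θ' => Lin (θ', ω')) θ₀) Dg ω := by
      rw [hgexpr]
      have h0 : HasFDerivAt (𝕜 := ℝ) (⇑Aθ) Aθ (fderiv ℝ Lin (θ₀, ω)) :=
        ContinuousLinearMap.hasFDerivAt (𝕜 := ℝ) (E := (E × W) →L[ℝ] ℝ) (F := E →L[ℝ] ℝ) Aθ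
      have h1 : HasFDerivAt (𝕜 := ℝ) (fun ω' => Aθ (fderiv ℝ Lin (θ₀, ω'))) (Aθ.comp (D2.comp inrW)) ω :=
        h0.comp (F := (E × W) →L[ℝ] ℝ) (G := E →L[ℝ] ℝ) ω hB
      have h2 : HasFDerivAt (𝕜 := ℝ) (⇑dualE) dualE (Aθ (fderiv ℝ Lin (θ₀, ω))) :=
        ContinuousLinearMap.hasFDerivAt (𝕜 := ℝ) (E := E →L[ℝ] ℝ) (F := E) dualE
      exact h2.comp (F := E →L[ℝ] ℝ) (G := E) ω h1
    have hΘd : HasFDerivAt Θs (-(α • Dg)) ω := by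
      rw [hΘ]
      simpa using (hg.const_smul α).const_sub θ₀
    -- derivative of F
    have hLd : HasFDerivAt Lout (fderiv ℝ Lout (ω, q)) (ω, q) := (hLoutd (ω, q)).hasFDerivAt
    set DF : W →L[ℝ] ℝ :=
      (fderiv ℝ Lout (ω, q)).comp ((ContinuousLinearMap.id ℝ W).prod (-(α • Dg))) with hDF
    have hFd : HasFDerivAt F DF ω := by
      rw [hF]
      exact hLd.comp ω ((hasFDerivAt_id ω).prodMk hΘd)
    -- identify DG θ₀
    have hpartω : ∀ θ : E, fderiv ℝ (fun ω' => Lin (θ, ω')) ω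
        = (fderiv ℝ Lin (θ, ω)).comp inrW := fun θ =>
      (((hd1 (θ, ω)).hasFDerivAt).comp ω (hasFDerivAt_prodMk_right θ ω)).fderiv
    have hGexpr : G = fun θ => dualW (Aω (fderiv ℝ Lin (θ, ω))) := by
      rw [hG]; funext θ
      show (InnerProductSpace.toDual ℝ W).symm (fderiv ℝ (fun ω' => Lin (θ, ω')) ω) = _
      rw [hpartω θ]
      rfl
    have hB' : HasFDerivAt (fun θ => fderiv ℝ Lin (θ, ω)) (D2.comp inlE) θ₀ := by
      have k1 := (hd2 (θ₀, ω)).hasFDerivAt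
      have k2 := hasFDerivAt_prodMk_left (𝕜 := ℝ) θ₀ ω
      exact k1.comp (F := E × W) (G := (E × W) →L[ℝ] ℝ) θ₀ k2
    have hGd : HasFDerivAt G (dualW.comp (Aω.comp (D2.comp inlE))) θ₀ := by
      rw [hGexpr]
      have h0 : HasFDerivAt (𝕜 := ℝ) (⇑Aω) Aω (fderiv ℝ Lin (θ₀, ω)) :=
        ContinuousLinearMap.hasFDerivAt (𝕜 := ℝ) (E := (E × W) →L[ℝ] ℝ) (F := W →L[ℝ] ℝ) Aω
      have h1 : HasFDerivAt (𝕜 := ℝ) (fun θ => Aω (fderiv ℝ Lin (θ, ω))) (Aω.comp (D2.comp inlE)) θ₀ :=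
        h0.comp (F := (E × W) →L[ℝ] ℝ) (G := W →L[ℝ] ℝ) θ₀ hB'
      have h2 : HasFDerivAt (𝕜 := ℝ) (⇑dualW) dualW (Aω (fderiv ℝ Lin (θ₀, ω))) :=
        ContinuousLinearMap.hasFDerivAt (𝕜 := ℝ) (E := W →L[ℝ] ℝ) (F := W) dualW
      exact h2.comp (F := W →L[ℝ] ℝ) (G := W) θ₀ h1
    have hDG0 : DG θ₀ = dualW.comp (Aω.comp (D2.comp inlE)) :=
      (hdiff θ₀ (Metric.mem_ball_self hr)).unique hGd
    -- partial fderivs of Lout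
    have hpartΩ : fderiv ℝ (fun ω' => Lout (ω', q)) ω
        = (fderiv ℝ Lout (ω, q)).comp (ContinuousLinearMap.inl ℝ W E) :=
      (((hLoutd (ω, q)).hasFDerivAt).comp ω (hasFDerivAt_prodMk_left ω q)).fderiv
    have hpartΘ : fderiv ℝ (fun θ' => Lout (ω, θ')) q
        = (fderiv ℝ Lout (ω, q)).comp (ContinuousLinearMap.inr ℝ W E) :=
      (((hLoutd (ω, q)).hasFDerivAt).comp q (hasFDerivAt_prodMk_right ω q)).fderiv
    -- inner product computations
    have hδinner : ∀ w : E, ⟪δ, w⟫ = fderiv ℝ Lout (ω, q) (0, w) := by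
      intro w
      rw [hδ]
      show ⟪(InnerProductSpace.toDual ℝ E).symm (fderiv ℝ (fun θ' => Lout (ω, θ')) q), w⟫ = _
      rw [InnerProductSpace.toDual_symm_apply, hpartΘ]
      rfl
    have hgradΩ : ∀ v : W, ⟪gradient (fun ω' => Lout (ω', q)) ω, v⟫ = fderiv ℝ Lout (ω, q) (v, 0) := by
      intro v
      show ⟪(InnerProductSpace.toDual ℝ W).symm (fderiv ℝ (fun ω' => Lout (ω', q)) ω), v⟫ = _
      rw [InnerProductSpace.toDual_symm_apply, hpartΩ]
      rfl
    have hDgδ : ∀ v : W, ⟪δ, Dg v⟫ = D2 (0, v) (δ, 0) := by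
      intro v
      rw [real_inner_comm, hDg]
      show ⟪(InnerProductSpace.toDual ℝ E).symm (Aθ (D2 (inrW v))), δ⟫ = _
      rw [InnerProductSpace.toDual_symm_apply]
      simp [hAθ, hinlE, hinrW]
    have hDGδ : ∀ v : W, ⟪DG θ₀ δ, v⟫ = D2 (δ, 0) (0, v) := by
      intro v
      rw [hDG0]
      show ⟪(InnerProductSpace.toDual ℝ W).symm (Aω (D2 (inlE δ))), v⟫ = _
      rw [InnerProductSpace.toDual_symm_apply]
      simp [hAω, hinlE, hinrW]
    apply ext_inner_right ℝ
    intro v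
    have hgradF : ⟪gradient F ω, v⟫ = DF v := by
      show ⟪(InnerProductSpace.toDual ℝ W).symm (fderiv ℝ F ω), v⟫ = _
      rw [InnerProductSpace.toDual_symm_apply, hFd.fderiv]
    rw [hgradF, inner_sub_left, real_inner_smul_left, hgradΩ v, hDGδ v]
    have hsplit : DF v = fderiv ℝ Lout (ω, q) (v, 0) + fderiv ℝ Lout (ω, q) (0, -(α • Dg v)) := by
      have e1 : DF v = fderiv ℝ Lout (ω, q) (v, -(α • Dg v)) := by
        simp [hDF]
      have e2 : ((v:W), -(α • Dg v)) = (v, (0:E)) + ((0:W), -(α • Dg v)) := by simp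
      rw [e1, e2, map_add]
    rw [hsplit, ← hδinner]
    have : ⟪δ, -(α • Dg v)⟫ = -(α * D2 (δ, 0) (0, v)) := by
      rw [inner_neg_right, real_inner_smul_right, hDgδ v, hsym]
    rw [this]
    ring
  set h : E := ε • δ with hhdef
  have hhn : ‖h‖ = |ε| * ‖δ‖ := by rw [hhdef, norm_smul, Real.norm_eq_abs]
  have hhr : ‖h‖ < r := by rw [hhn]; exact hεδ
  have hbd := central_diff_bound' G DG θ₀ r M hM hdiff hLip h hhr
  have hDG2 : DG θ₀ ((2:ℝ) • h) = (2 * ε) • DG θ₀ δ := by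
    rw [hhdef, map_smul, map_smul, smul_smul]
  have h2ε : (2:ℝ) * ε ≠ 0 := by simp [hε]
  have hc : (α / (2 * ε)) * (2 * ε) = α := div_mul_cancel₀ α h2ε
  have herr : (gradient (fun ω' => Lout (ω', Θs ω)) ω
        - (α / (2 * ε)) • (G (θ₀ + ε • δ) - G (θ₀ - ε • δ))) - gradient F ω
      = -((α / (2 * ε)) • (G (θ₀ + h) - G (θ₀ - h) - DG θ₀ ((2:ℝ) • h))) := by
    rw [key, hDG2, hhdef, smul_sub, smul_sub, smul_smul, hc]
    module
  rw [herr, norm_neg, norm_smul, Real.norm_eq_abs]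
  calc |α / (2 * ε)| * ‖G (θ₀ + h) - G (θ₀ - h) - DG θ₀ ((2:ℝ) • h)‖
      ≤ |α / (2 * ε)| * (M * ‖h‖ ^ 2) :=
        mul_le_mul_of_nonneg_left hbd (abs_nonneg _)
    _ = (|α| * M / 2) * |ε| * ‖δ‖ ^ 2 := by
        rw [hhn, abs_div, abs_mul, abs_two]
        have hε' : |ε| ≠ 0 := abs_ne_zero.2 hε
        field_simp
end
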